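/- Under condition (H1), the maps m^±: S → N^±(Φ) defined by m^±(u) := t^±(u)u are homeomorphisms from the unit sphere S onto N^±(Φ). -/

import Mathlib

open Metric Set Filter Topology

section aux

variable {X : Type*} [NormedAddCommGroup X] [NormedSpace ℝ X]
variable {Φ : X → ℝ} {Φ' : X → (X →L[ℝ] ℝ)} {tp tm : X → ℝ}

lemma fib_hasDerivAt (hΦdiff : ∀ u : X, u ≠ 0 → HasFDerivAt Φ (Φ' u) u)
    {u : X} (hu : u ≠ 0) {t : ℝ} (ht : t ≠ 0) :
    HasDerivAt (fun t : ℝ => Φ (t • u)) (Φ' (t • u) u) t := by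
  have h1 : HasDerivAt (fun t : ℝ => t • u) u t := by
    simpa using (hasDerivAt_id t).smul_const u
  have h2 := (hΦdiff _ (smul_ne_zero ht hu)).comp_hasDerivAt t h1
  exact h2

lemma Dt_contOn (hΦcont : ContinuousOn Φ' {x : X | x ≠ 0}) {u : X} (hu : u ≠ 0)
    {a b : ℝ} (ha : 0 < a) :
    ContinuousOn (fun t : ℝ => Φ' (t • u) u) (Icc a b) := by
  have h1 : ContinuousOn (fun t : ℝ => Φ' (t • u)) (Icc a b) := by
    apply hΦcont.comp ((continuous_id.smul continuous_const).continuousOn)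
    intro t ht
    exact smul_ne_zero (ne_of_gt (lt_of_lt_of_le ha ht.1)) hu
  exact h1.clm_apply continuousOn_const

/-- The derivative of the fibering map is negative on `(0, tp u)`. -/
lemma signA
    (hΦdiff : ∀ u : X, u ≠ 0 → HasFDerivAt Φ (Φ' u) u)
    (hΦcont : ContinuousOn Φ' {x : X | x ≠ 0})
    (h1pos : ∀ u : X, u ≠ 0 → 0 < tp u)
    (h1lt : ∀ u : X, u ≠ 0 → tp u < tm u)
    (h1min : ∀ u : X, u ≠ 0 → IsLocalMin (fun t : ℝ => Φ (t • u)) (tp u))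
    (h1crit : ∀ u : X, u ≠ 0 → ∀ t : ℝ, 0 < t →
      (Φ' (t • u) u = 0 ↔ t = tp u ∨ t = tm u))
    {u : X} (hu : u ≠ 0) {s : ℝ} (hs0 : 0 < s) (hs : s < tp u) :
    Φ' (s • u) u < 0 := by
  have htptm := h1lt u hu
  have hzero : ∀ t : ℝ, 0 < t → t ≠ tp u → t ≠ tm u → Φ' (t • u) u ≠ 0 := by
    intro t ht h1 h2 h0
    rcases (h1crit u hu t ht).1 h0 with h | h
    exacts [h1 h, h2 h]
  have hDs : Φ' (s • u) u ≠ 0 :=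
    hzero s hs0 (ne_of_lt hs) (ne_of_lt (hs.trans htptm))
  rcases hDs.lt_or_gt with h | h
  · exact h
  exfalso
  have hpos : ∀ t ∈ Ioo s (tp u), 0 < Φ' (t • u) u := by
    intro t ht
    have ht0 : 0 < t := hs0.trans ht.1
    have hDt : Φ' (t • u) u ≠ 0 :=
      hzero t ht0 (ne_of_lt ht.2) (ne_of_lt (ht.2.trans htptm))
    rcases hDt.lt_or_gt with hneg | hp
    · exfalso
      have hcont : ContinuousOn (fun t : ℝ => Φ' (t • u) u) (Icc s t) :=
        Dt_contOn hΦcont hu hs0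
      have h0mem : (0:ℝ) ∈ (fun t : ℝ => Φ' (t • u) u) '' Icc s t :=
        intermediate_value_Icc' ht.1.le hcont ⟨hneg.le, h.le⟩
      obtain ⟨c, hc, hc0⟩ := h0mem
      have hc0' : 0 < c := lt_of_lt_of_le hs0 hc.1
      exact hzero c hc0' (ne_of_lt (lt_of_le_of_lt hc.2 ht.2))
        (ne_of_lt (lt_of_le_of_lt hc.2 (ht.2.trans htptm))) hc0
    · exact hp
  have hmono : StrictMonoOn (fun t : ℝ => Φ (t • u)) (Icc s (tp u)) := by
    apply strictMonoOn_of_deriv_pos (convex_Icc s (tp u))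
    · intro t ht
      exact (fib_hasDerivAt hΦdiff hu
        (ne_of_gt (hs0.trans_le ht.1))).continuousAt.continuousWithinAt
    · intro t ht
      rw [interior_Icc] at ht
      rw [(fib_hasDerivAt hΦdiff hu (ne_of_gt (hs0.trans ht.1))).deriv]
      exact hpos t ht
  have hev : ∀ᶠ t in 𝓝[<] (tp u),
      (fun t : ℝ => Φ (t • u)) (tp u) ≤ (fun t : ℝ => Φ (t • u)) t :=
    (h1min u hu).filter_mono nhdsWithin_le_nhds
  have hmem : Ioo s (tp u) ∈ 𝓝[<] (tp u) :=
    Ioo_mem_nhdsLT_of_mem ⟨hs, le_refl _⟩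
  obtain ⟨t, ht1, ht2⟩ := (hev.and (eventually_of_mem hmem (fun _ h => h))).exists
  have hlt : Φ (t • u) < Φ (tp u • u) :=
    hmono ⟨ht2.1.le, ht2.2.le⟩ (right_mem_Icc.2 hs.le) ht2.2
  simp only at ht1
  linarith

/-- The derivative of the fibering map is positive on `(tp u, tm u)`. -/
lemma signB
    (hΦdiff : ∀ u : X, u ≠ 0 → HasFDerivAt Φ (Φ' u) u)
    (hΦcont : ContinuousOn Φ' {x : X | x ≠ 0})
    (h1pos : ∀ u : X, u ≠ 0 → 0 < tp u)
    (h1lt : ∀ u : X, u ≠ 0 → tp u < tm u)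
    (h1min : ∀ u : X, u ≠ 0 → IsLocalMin (fun t : ℝ => Φ (t • u)) (tp u))
    (h1crit : ∀ u : X, u ≠ 0 → ∀ t : ℝ, 0 < t →
      (Φ' (t • u) u = 0 ↔ t = tp u ∨ t = tm u))
    {u : X} (hu : u ≠ 0) {s : ℝ} (hs1 : tp u < s) (hs2 : s < tm u) :
    0 < Φ' (s • u) u := by
  have htp0 := h1pos u hu
  have hs0 : 0 < s := htp0.trans hs1
  have hzero : ∀ t : ℝ, 0 < t → t ≠ tp u → t ≠ tm u → Φ' (t • u) u ≠ 0 := by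
    intro t ht h1 h2 h0
    rcases (h1crit u hu t ht).1 h0 with h | h
    exacts [h1 h, h2 h]
  have hDs : Φ' (s • u) u ≠ 0 :=
    hzero s hs0 (ne_of_gt hs1) (ne_of_lt hs2)
  rcases hDs.lt_or_gt with h | h
  swap
  · exact h
  exfalso
  have hneg : ∀ t ∈ Ioo (tp u) s, Φ' (t • u) u < 0 := by
    intro t ht
    have ht0 : 0 < t := htp0.trans ht.1
    have hDt : Φ' (t • u) u ≠ 0 :=
      hzero t ht0 (ne_of_gt ht.1) (ne_of_lt (ht.2.trans hs2))
    rcases hDt.lt_or_gt with hn | hp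
    · exact hn
    exfalso
    have hcont : ContinuousOn (fun t : ℝ => Φ' (t • u) u) (Icc t s) :=
      Dt_contOn hΦcont hu ht0
    have h0mem : (0:ℝ) ∈ (fun t : ℝ => Φ' (t • u) u) '' Icc t s :=
      intermediate_value_Icc' ht.2.le hcont ⟨h.le, hp.le⟩
    obtain ⟨c, hc, hc0⟩ := h0mem
    have hc0' : 0 < c := lt_of_lt_of_le ht0 hc.1
    exact hzero c hc0' (ne_of_gt (lt_of_lt_of_le ht.1 hc.1))
      (ne_of_lt (lt_of_le_of_lt hc.2 hs2)) hc0
  have hmono : StrictAntiOn (fun t : ℝ => Φ (t • u)) (Icc (tp u) s) := by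
    apply strictAntiOn_of_deriv_neg (convex_Icc (tp u) s)
    · intro t ht
      exact (fib_hasDerivAt hΦdiff hu
        (ne_of_gt (htp0.trans_le ht.1))).continuousAt.continuousWithinAt
    · intro t ht
      rw [interior_Icc] at ht
      rw [(fib_hasDerivAt hΦdiff hu (ne_of_gt (htp0.trans ht.1))).deriv]
      exact hneg t ht
  have hev : ∀ᶠ t in 𝓝[>] (tp u),
      (fun t : ℝ => Φ (t • u)) (tp u) ≤ (fun t : ℝ => Φ (t • u)) t :=
    (h1min u hu).filter_mono nhdsWithin_le_nhds
  have hmem : Ioo (tp u) s ∈ 𝓝[>] (tp u) :=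
    Ioo_mem_nhdsGT_of_mem ⟨le_refl _, hs1⟩
  obtain ⟨t, ht1, ht2⟩ := (hev.and (eventually_of_mem hmem (fun _ h => h))).exists
  have hlt : Φ (t • u) < Φ (tp u • u) :=
    hmono (left_mem_Icc.2 hs1.le) ⟨ht2.1.le, ht2.2.le⟩ ht2.1
  simp only at ht1
  linarith

/-- The derivative of the fibering map is negative on `(tm u, ∞)`. -/
lemma signC
    (hΦdiff : ∀ u : X, u ≠ 0 → HasFDerivAt Φ (Φ' u) u)
    (hΦcont : ContinuousOn Φ' {x : X | x ≠ 0})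
    (h1pos : ∀ u : X, u ≠ 0 → 0 < tp u)
    (h1lt : ∀ u : X, u ≠ 0 → tp u < tm u)
    (h1max : ∀ u : X, u ≠ 0 → IsLocalMax (fun t : ℝ => Φ (t • u)) (tm u))
    (h1crit : ∀ u : X, u ≠ 0 → ∀ t : ℝ, 0 < t →
      (Φ' (t • u) u = 0 ↔ t = tp u ∨ t = tm u))
    {u : X} (hu : u ≠ 0) {s : ℝ} (hs : tm u < s) :
    Φ' (s • u) u < 0 := by
  have htp0 := h1pos u hu
  have htptm := h1lt u hu
  have htm0 : 0 < tm u := htp0.trans htptm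
  have hs0 : 0 < s := htm0.trans hs
  have hzero : ∀ t : ℝ, 0 < t → t ≠ tp u → t ≠ tm u → Φ' (t • u) u ≠ 0 := by
    intro t ht h1 h2 h0
    rcases (h1crit u hu t ht).1 h0 with h | h
    exacts [h1 h, h2 h]
  have hDs : Φ' (s • u) u ≠ 0 :=
    hzero s hs0 (ne_of_gt (htptm.trans hs)) (ne_of_gt hs)
  rcases hDs.lt_or_gt with h | h
  · exact h
  exfalso
  have hpos : ∀ t ∈ Ioo (tm u) s, 0 < Φ' (t • u) u := by
    intro t ht
    have ht0 : 0 < t := htm0.trans ht.1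
    have hDt : Φ' (t • u) u ≠ 0 :=
      hzero t ht0 (ne_of_gt (htptm.trans ht.1)) (ne_of_gt ht.1)
    rcases hDt.lt_or_gt with hn | hp
    swap
    · exact hp
    exfalso
    have hcont : ContinuousOn (fun t : ℝ => Φ' (t • u) u) (Icc t s) :=
      Dt_contOn hΦcont hu ht0
    have h0mem : (0:ℝ) ∈ (fun t : ℝ => Φ' (t • u) u) '' Icc t s :=
      intermediate_value_Icc ht.2.le hcont ⟨hn.le, h.le⟩
    obtain ⟨c, hc, hc0⟩ := h0mem
    have hc0' : 0 < c := lt_of_lt_of_le ht0 hc.1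
    exact hzero c hc0' (ne_of_gt (htptm.trans (lt_of_lt_of_le ht.1 hc.1)))
      (ne_of_gt (lt_of_lt_of_le ht.1 hc.1)) hc0
  have hmono : StrictMonoOn (fun t : ℝ => Φ (t • u)) (Icc (tm u) s) := by
    apply strictMonoOn_of_deriv_pos (convex_Icc (tm u) s)
    · intro t ht
      exact (fib_hasDerivAt hΦdiff hu
        (ne_of_gt (htm0.trans_le ht.1))).continuousAt.continuousWithinAt
    · intro t ht
      rw [interior_Icc] at ht
      rw [(fib_hasDerivAt hΦdiff hu (ne_of_gt (htm0.trans ht.1))).deriv]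
      exact hpos t ht
  have hev : ∀ᶠ t in 𝓝[>] (tm u),
      (fun t : ℝ => Φ (t • u)) t ≤ (fun t : ℝ => Φ (t • u)) (tm u) :=
    (h1max u hu).filter_mono nhdsWithin_le_nhds
  have hmem : Ioo (tm u) s ∈ 𝓝[>] (tm u) :=
    Ioo_mem_nhdsGT_of_mem ⟨le_refl _, hs⟩
  obtain ⟨t, ht1, ht2⟩ := (hev.and (eventually_of_mem hmem (fun _ h => h))).exists
  have hlt : Φ (tm u • u) < Φ (t • u) :=
    hmono (left_mem_Icc.2 hs.le) ⟨ht2.1.le, ht2.2.le⟩ ht2.1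
  simp only at ht1
  linarith

/-- Joint continuity of `w ↦ Φ'(s • w) w` away from the origin. -/
lemma Dw_contAt (hΦcont : ContinuousOn Φ' {x : X | x ≠ 0})
    {s : ℝ} (hs : s ≠ 0) {u : X} (hu : u ≠ 0) :
    ContinuousAt (fun w : X => Φ' (s • w) w) u := by
  have hopen : IsOpen {x : X | x ≠ 0} := isOpen_compl_singleton
  have h1 : ContinuousOn (fun w : X => Φ' (s • w)) {x : X | x ≠ 0} := by
    apply hΦcont.comp ((continuous_const.smul continuous_id).continuousOn)
    intro w hw
    exact smul_ne_zero hs hw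
  have h2 : ContinuousOn (fun w : X => Φ' (s • w) w) {x : X | x ≠ 0} :=
    h1.clm_apply continuousOn_id
  exact h2.continuousAt (hopen.mem_nhds hu)

lemma cont_tp
    (hΦdiff : ∀ u : X, u ≠ 0 → HasFDerivAt Φ (Φ' u) u)
    (hΦcont : ContinuousOn Φ' {x : X | x ≠ 0})
    (h1pos : ∀ u : X, u ≠ 0 → 0 < tp u)
    (h1lt : ∀ u : X, u ≠ 0 → tp u < tm u)
    (h1min : ∀ u : X, u ≠ 0 → IsLocalMin (fun t : ℝ => Φ (t • u)) (tp u))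
    (h1max : ∀ u : X, u ≠ 0 → IsLocalMax (fun t : ℝ => Φ (t • u)) (tm u))
    (h1crit : ∀ u : X, u ≠ 0 → ∀ t : ℝ, 0 < t →
      (Φ' (t • u) u = 0 ↔ t = tp u ∨ t = tm u)) :
    ContinuousOn tp {x : X | x ≠ 0} := by
  have hzero : ∀ w : X, w ≠ 0 → ∀ t : ℝ, 0 < t → t ≠ tp w → t ≠ tm w →
      Φ' (t • w) w ≠ 0 := by
    intro w hw t ht h1 h2 h0
    rcases (h1crit w hw t ht).1 h0 with h | h
    exacts [h1 h, h2 h]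
  intro u hu
  have hu' : u ≠ 0 := hu
  apply ContinuousAt.continuousWithinAt
  rw [Metric.continuousAt_iff']
  intro ε hε
  set ε' : ℝ := min (ε/2) (min (tp u / 2) ((tm u - tp u)/2)) with hε'def
  have htp0 := h1pos u hu'
  have htptm := h1lt u hu'
  have hε'0 : 0 < ε' := by
    apply lt_min (by linarith)
    exact lt_min (by linarith) (by linarith)
  have hε'1 : ε' ≤ ε/2 := min_le_left _ _
  have hε'2 : ε' ≤ tp u / 2 := le_trans (min_le_right _ _) (min_le_left _ _)
  have hε'3 : ε' ≤ (tm u - tp u)/2 := le_trans (min_le_right _ _) (min_le_right _ _)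
  set s₁ : ℝ := tp u - ε' with hs₁def
  set s₂ : ℝ := tp u + ε' with hs₂def
  have hs₁0 : 0 < s₁ := by simp only [hs₁def]; linarith
  have hs₁lt : s₁ < tp u := by simp only [hs₁def]; linarith
  have hs₂gt : tp u < s₂ := by simp only [hs₂def]; linarith
  have hs₂lt : s₂ < tm u := by simp only [hs₂def]; linarith
  have hD1 : Φ' (s₁ • u) u < 0 :=
    signA hΦdiff hΦcont h1pos h1lt h1min h1crit hu' hs₁0 hs₁lt
  have hD2 : 0 < Φ' (s₂ • u) u :=
    signB hΦdiff hΦcont h1pos h1lt h1min h1crit hu' hs₂gt hs₂lt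
  have hc1 : ContinuousAt (fun w : X => Φ' (s₁ • w) w) u :=
    Dw_contAt hΦcont (ne_of_gt hs₁0) hu'
  have hc2 : ContinuousAt (fun w : X => Φ' (s₂ • w) w) u :=
    Dw_contAt hΦcont (ne_of_gt (htp0.trans hs₂gt)) hu'
  have hev1 : ∀ᶠ w in 𝓝 u, Φ' (s₁ • w) w < 0 :=
    hc1.eventually_lt_const hD1
  have hev2 : ∀ᶠ w in 𝓝 u, 0 < Φ' (s₂ • w) w :=
    hc2.eventually_const_lt hD2
  have hev0 : ∀ᶠ w in 𝓝 u, w ≠ 0 :=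
    (isOpen_compl_singleton.mem_nhds hu' : {x : X | x ≠ 0} ∈ 𝓝 u)
  filter_upwards [hev0, hev1, hev2] with w hw0 hw1 hw2
  -- show s₁ < tp w and tp w < s₂
  have hs₂0 : 0 < s₂ := htp0.trans hs₂gt
  have hA : tp w < s₂ := by
    rcases lt_trichotomy (tp w) s₂ with h | h | h
    · exact h
    · exact absurd ((h1crit w hw0 s₂ hs₂0).2 (Or.inl h.symm)) (ne_of_gt hw2)
    · exact absurd (signA hΦdiff hΦcont h1pos h1lt h1min h1crit hw0 hs₂0 h)
        (not_lt.2 hw2.le)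
  have hB : s₁ < tp w := by
    rcases lt_trichotomy s₁ (tp w) with h | h | h
    · exact h
    · exact absurd ((h1crit w hw0 s₁ hs₁0).2 (Or.inl h)) (ne_of_lt hw1)
    · rcases lt_trichotomy s₁ (tm w) with h' | h' | h'
      · exact absurd (signB hΦdiff hΦcont h1pos h1lt h1min h1crit hw0 h h')
          (not_lt.2 hw1.le)
      · exact absurd ((h1crit w hw0 s₁ hs₁0).2 (Or.inr h')) (ne_of_lt hw1)
      · have h'' : tm w < s₂ :=
          h'.trans ((by simp only [hs₁def, hs₂def]; linarith : s₁ < s₂))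
        exact absurd (signC hΦdiff hΦcont h1pos h1lt h1max h1crit hw0 h'')
          (not_lt.2 hw2.le)
  rw [Real.dist_eq, abs_sub_lt_iff]
  constructor
  · simp only [hs₂def] at hA; linarith
  · simp only [hs₁def] at hB; linarith

lemma cont_tm
    (hΦdiff : ∀ u : X, u ≠ 0 → HasFDerivAt Φ (Φ' u) u)
    (hΦcont : ContinuousOn Φ' {x : X | x ≠ 0})
    (h1pos : ∀ u : X, u ≠ 0 → 0 < tp u)
    (h1lt : ∀ u : X, u ≠ 0 → tp u < tm u)
    (h1min : ∀ u : X, u ≠ 0 → IsLocalMin (fun t : ℝ => Φ (t • u)) (tp u))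
    (h1max : ∀ u : X, u ≠ 0 → IsLocalMax (fun t : ℝ => Φ (t • u)) (tm u))
    (h1crit : ∀ u : X, u ≠ 0 → ∀ t : ℝ, 0 < t →
      (Φ' (t • u) u = 0 ↔ t = tp u ∨ t = tm u)) :
    ContinuousOn tm {x : X | x ≠ 0} := by
  have hzero : ∀ w : X, w ≠ 0 → ∀ t : ℝ, 0 < t → t ≠ tp w → t ≠ tm w →
      Φ' (t • w) w ≠ 0 := by
    intro w hw t ht h1 h2 h0
    rcases (h1crit w hw t ht).1 h0 with h | h
    exacts [h1 h, h2 h]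
  intro u hu
  have hu' : u ≠ 0 := hu
  apply ContinuousAt.continuousWithinAt
  rw [Metric.continuousAt_iff']
  intro ε hε
  set ε' : ℝ := min (ε/2) ((tm u - tp u)/2) with hε'def
  have htp0 := h1pos u hu'
  have htptm := h1lt u hu'
  have hε'0 : 0 < ε' := lt_min (by linarith) (by linarith)
  have hε'1 : ε' ≤ ε/2 := min_le_left _ _
  have hε'2 : ε' ≤ (tm u - tp u)/2 := min_le_right _ _
  set s₁ : ℝ := tm u - ε' with hs₁def
  set s₂ : ℝ := tm u + ε' with hs₂def
  have hs₁gt : tp u < s₁ := by simp only [hs₁def]; linarith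
  have hs₁lt : s₁ < tm u := by simp only [hs₁def]; linarith
  have hs₂gt : tm u < s₂ := by simp only [hs₂def]; linarith
  have hs₁0 : 0 < s₁ := htp0.trans hs₁gt
  have hD1 : 0 < Φ' (s₁ • u) u :=
    signB hΦdiff hΦcont h1pos h1lt h1min h1crit hu' hs₁gt hs₁lt
  have hD2 : Φ' (s₂ • u) u < 0 :=
    signC hΦdiff hΦcont h1pos h1lt h1max h1crit hu' hs₂gt
  have hc1 : ContinuousAt (fun w : X => Φ' (s₁ • w) w) u :=
    Dw_contAt hΦcont (ne_of_gt hs₁0) hu'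
  have hc2 : ContinuousAt (fun w : X => Φ' (s₂ • w) w) u :=
    Dw_contAt hΦcont (ne_of_gt (hs₁0.trans (hs₁lt.trans hs₂gt))) hu'
  have hev1 : ∀ᶠ w in 𝓝 u, 0 < Φ' (s₁ • w) w :=
    hc1.eventually_const_lt hD1
  have hev2 : ∀ᶠ w in 𝓝 u, Φ' (s₂ • w) w < 0 :=
    hc2.eventually_lt_const hD2
  have hev0 : ∀ᶠ w in 𝓝 u, w ≠ 0 :=
    (isOpen_compl_singleton.mem_nhds hu' : {x : X | x ≠ 0} ∈ 𝓝 u)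
  filter_upwards [hev0, hev1, hev2] with w hw0 hw1 hw2
  have hs₂0 : 0 < s₂ := hs₁0.trans (hs₁lt.trans hs₂gt)
  have hA : s₁ < tm w := by
    rcases lt_trichotomy s₁ (tm w) with h | h | h
    · exact h
    · exact absurd ((h1crit w hw0 s₁ hs₁0).2 (Or.inr h)) (ne_of_gt hw1)
    · exact absurd (signC hΦdiff hΦcont h1pos h1lt h1max h1crit hw0 h)
        (not_lt.2 hw1.le)
  have hB : tm w < s₂ := by
    rcases lt_trichotomy (tm w) s₂ with h | h | h
    · exact h
    · exact absurd ((h1crit w hw0 s₂ hs₂0).2 (Or.inr h.symm)) (ne_of_lt hw2)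
    · rcases lt_trichotomy s₂ (tp w) with h' | h' | h'
      · have h'' : s₁ < tp w :=
          ((by simp only [hs₁def, hs₂def]; linarith : s₁ < s₂)).trans h'
        exact absurd (signA hΦdiff hΦcont h1pos h1lt h1min h1crit hw0 hs₁0 h'')
          (not_lt.2 hw1.le)
      · exact absurd ((h1crit w hw0 s₂ hs₂0).2 (Or.inl h')) (ne_of_lt hw2)
      · exact absurd (signB hΦdiff hΦcont h1pos h1lt h1min h1crit hw0 h' h)
          (not_lt.2 hw2.le)
  rw [Real.dist_eq, abs_sub_lt_iff]
  constructor
  · simp only [hs₂def] at hB; linarith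
  · simp only [hs₁def] at hA; linarith

/-- Given a positive continuous scaling function, `u ↦ t(u) • u` is a homeomorphism
from the sphere onto its image. -/
lemma mk_homeo (t_ : X → ℝ) (hpos : ∀ u : X, u ≠ 0 → 0 < t_ u)
    (hcont : ContinuousOn t_ {x : X | x ≠ 0}) :
    ∃ h : (sphere (0 : X) 1) ≃ₜ ((fun u : X => t_ u • u) '' sphere (0 : X) 1),
      ∀ u : sphere (0 : X) 1, (h u : X) = t_ (u : X) • (u : X) := by
  have hsub : (sphere (0 : X) 1 : Set X) ⊆ {x : X | x ≠ 0} := by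
    intro x hx
    have : ‖x‖ = 1 := mem_sphere_zero_iff_norm.1 hx
    simp only [mem_setOf_eq]
    intro h0
    rw [h0] at this; simp at this
  have hr : ∀ u : X, u ∈ sphere (0 : X) 1 → ‖(t_ u • u)‖⁻¹ • (t_ u • u) = u := by
    intro u hu
    have hu1 : ‖u‖ = 1 := mem_sphere_zero_iff_norm.1 hu
    have htu : 0 < t_ u := hpos u (hsub hu)
    rw [norm_smul, hu1, Real.norm_eq_abs, abs_of_pos htu, mul_one, smul_smul,
      inv_mul_cancel₀ (ne_of_gt htu), one_smul]
  have hNsub : ((fun u : X => t_ u • u) '' sphere (0 : X) 1) ⊆ {x : X | x ≠ 0} := by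
    rintro x ⟨v, hv, rfl⟩
    exact smul_ne_zero (ne_of_gt (hpos v (hsub hv))) (hsub hv)
  have hmemS : ∀ w : ((fun u : X => t_ u • u) '' sphere (0 : X) 1),
      ‖(w : X)‖⁻¹ • (w : X) ∈ sphere (0 : X) 1 := by
    rintro ⟨w, hw⟩
    obtain ⟨v, hv, rfl⟩ := hw
    simp only [hr v hv]
    exact hv
  refine ⟨{
    toFun := fun u => ⟨t_ (u : X) • (u : X), mem_image_of_mem _ u.2⟩
    invFun := fun w => ⟨‖(w : X)‖⁻¹ • (w : X), hmemS w⟩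
    left_inv := by
      intro u
      exact Subtype.ext (hr u u.2)
    right_inv := by
      rintro ⟨w, hw⟩
      obtain ⟨v, hv, rfl⟩ := hw
      apply Subtype.ext
      simp only [hr v hv]
    continuous_toFun := by
      apply Continuous.subtype_mk
      exact ((hcont.mono hsub).restrict.smul continuous_subtype_val)
    continuous_invFun := by
      apply Continuous.subtype_mk
      have hrc : ContinuousOn (fun x : X => ‖x‖⁻¹ • x) {x : X | x ≠ 0} := by
        apply ContinuousOn.smul _ continuousOn_id
        exact (continuous_norm.continuousOn).inv₀ fun x hx => norm_ne_zero_iff.2 hx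
      exact (hrc.mono hNsub).restrict
  }, fun u => rfl⟩

end aux

/-- Under (H1), `m^± : S → N^±(Φ)`, `m^±(u) = t^±(u) • u`, are
homeomorphisms from the unit sphere onto `N^±(Φ) = {t^±(u) • u : u ∈ S}`. -/
theorem statement_1
    {X : Type*} [NormedAddCommGroup X] [NormedSpace ℝ X] [CompleteSpace X]
    [UniformConvexSpace X]
    (hinf : ¬ FiniteDimensional ℝ X)
    (hnorm : ContDiffOn ℝ 1 (fun x : X => ‖x‖) {x : X | x ≠ 0})
    (Φ : X → ℝ) (Φ' : X → (X →L[ℝ] ℝ))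
    (hΦdiff : ∀ u : X, u ≠ 0 → HasFDerivAt Φ (Φ' u) u)
    (hΦcont : ContinuousOn Φ' {x : X | x ≠ 0})
    (tp tm : X → ℝ)
    (h1pos : ∀ u : X, u ≠ 0 → 0 < tp u)
    (h1lt : ∀ u : X, u ≠ 0 → tp u < tm u)
    (h1min : ∀ u : X, u ≠ 0 → IsLocalMin (fun t : ℝ => Φ (t • u)) (tp u))
    (h1max : ∀ u : X, u ≠ 0 → IsLocalMax (fun t : ℝ => Φ (t • u)) (tm u))
    (h1crit : ∀ u : X, u ≠ 0 → ∀ t : ℝ, 0 < t →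
      (Φ' (t • u) u = 0 ↔ t = tp u ∨ t = tm u))
    (h1tp : ∀ K : Set X, K ⊆ sphere (0 : X) 1 → IsCompact K →
      ∃ a b : ℝ, 0 < a ∧ ∀ u ∈ K, a ≤ tp u ∧ tp u ≤ b)
    (h1tm0 : ∃ a : ℝ, 0 < a ∧ ∀ u ∈ sphere (0 : X) 1, a ≤ tm u)
    (h1tm1 : ∀ K : Set X, K ⊆ sphere (0 : X) 1 → IsCompact K →
      ∃ b : ℝ, ∀ u ∈ K, tm u ≤ b) :
    (∃ h : (sphere (0 : X) 1) ≃ₜ ((fun u : X => tp u • u) '' sphere (0 : X) 1),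
       ∀ u : sphere (0 : X) 1, (h u : X) = tp (u : X) • (u : X)) ∧
    (∃ h : (sphere (0 : X) 1) ≃ₜ ((fun u : X => tm u • u) '' sphere (0 : X) 1),
       ∀ u : sphere (0 : X) 1, (h u : X) = tm (u : X) • (u : X)) := by
  constructor
  · exact mk_homeo tp h1pos
      (cont_tp hΦdiff hΦcont h1pos h1lt h1min h1max h1crit)
  · have htmpos : ∀ u : X, u ≠ 0 → 0 < tm u := fun u hu =>
      (h1pos u hu).trans (h1lt u hu)
    exact mk_homeo tm htmpos
      (cont_tm hΦdiff hΦcont h1pos h1lt h1min h1max h1crit)
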